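/- Let Y_A ⊆ (C*)^m be the torus image of the monomial map φ_A given by a matrix A ∈ ℤ^{n×m} of rank n, over the algebraic closure C of a non-trivially real-closed valued field R with value group ℝ. Then the positive tropicalization of Y_A equals the row span of A: Trop⁺(Y_A) = rowspan(A) ⊆ ℝ^m. -/

import Mathlib

/-- Let `Y_A` be the torus image of the monomial map `φ_A` given by
`A ∈ ℤ^{n×m}` of rank `n`, over a non-trivially valued real closed field `R` with value
group `ℝ`. Since `Y_A ∩ R^m_{>0} = φ_A(R^n_{>0})`, the positive tropicalization of `Y_A`
(the closure of the valuations of its positive points) equals the row span of `A`. -/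
theorem stmt8 {R : Type*} [Field R] [LinearOrder R] [IsStrictOrderedRing R]
    -- real closedness of `R`
    (hsq : ∀ x : R, 0 ≤ x → ∃ y : R, y ^ 2 = x)
    (hodd : ∀ p : Polynomial R, Odd p.natDegree → ∃ x : R, p.eval x = 0)
    -- the valuation, with value group `ℝ` hit by positive elements
    (ν : R → ℝ)
    (hmul : ∀ x y : R, x ≠ 0 → y ≠ 0 → ν (x * y) = ν x + ν y)
    (hsurj : ∀ u : ℝ, ∃ r : R, 0 < r ∧ ν r = u)
    {n m : ℕ} (A : Matrix (Fin n) (Fin m) ℤ)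
    (hrank : (A.map ((↑) : ℤ → ℚ)).rank = n) :
    closure {w : Fin m → ℝ |
        ∃ x : Fin n → R, (∀ i, 0 < x i) ∧ ∀ j, ν (∏ i, x i ^ A i j) = w j}
      = {w : Fin m → ℝ | ∃ v : Fin n → ℝ, ∀ j, w j = ∑ i, (A i j : ℝ) * v i} := by
  have hν1 : ν 1 = 0 := by
    have := hmul 1 1 one_ne_zero one_ne_zero
    simp at this
    linarith
  have hinv : ∀ x : R, x ≠ 0 → ν x⁻¹ = - ν x := by
    intro x hx
    have := hmul x x⁻¹ hx (inv_ne_zero hx)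
    rw [mul_inv_cancel₀ hx, hν1] at this
    linarith
  have hpow : ∀ (x : R), x ≠ 0 → ∀ k : ℤ, ν (x ^ k) = k * ν x := by
    intro x hx k
    induction k using Int.induction_on with
    | zero => simpa using hν1
    | succ n ih =>
        have hxn : x ^ (n : ℤ) ≠ 0 := zpow_ne_zero _ hx
        rw [zpow_add_one₀ hx, hmul _ _ hxn hx, ih]
        push_cast; ring
    | pred n ih =>
        have hxn : x ^ (-(n : ℤ)) ≠ 0 := zpow_ne_zero _ hx
        rw [zpow_sub_one₀ hx, hmul _ _ hxn (inv_ne_zero hx), ih, hinv x hx]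
        push_cast; ring
  have hprod : ∀ (s : Finset (Fin n)) (f : Fin n → R), (∀ i ∈ s, f i ≠ 0) →
      ν (∏ i ∈ s, f i) = ∑ i ∈ s, ν (f i) := by
    intro s
    induction s using Finset.induction_on with
    | empty => intro f _; simpa using hν1
    | insert _ _ hnot ih =>
        intro f hf
        rw [Finset.prod_insert hnot, Finset.sum_insert hnot,
          hmul _ _ (hf _ (Finset.mem_insert_self _ _))
            (Finset.prod_ne_zero_iff.mpr (fun i hi => hf i (Finset.mem_insert_of_mem hi))),
          ih f (fun i hi => hf i (Finset.mem_insert_of_mem hi))]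
  have hset : {w : Fin m → ℝ |
        ∃ x : Fin n → R, (∀ i, 0 < x i) ∧ ∀ j, ν (∏ i, x i ^ A i j) = w j}
      = {w : Fin m → ℝ | ∃ v : Fin n → ℝ, ∀ j, w j = ∑ i, (A i j : ℝ) * v i} := by
    ext w
    constructor
    · rintro ⟨x, hx, hw⟩
      refine ⟨fun i => ν (x i), fun j => ?_⟩
      rw [← hw j, hprod _ _ (fun i _ => zpow_ne_zero _ (ne_of_gt (hx i)))]
      exact Finset.sum_congr rfl fun i _ => hpow (x i) (ne_of_gt (hx i)) (A i j)
    · rintro ⟨v, hv⟩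
      choose x hx hνx using fun i => hsurj (v i)
      refine ⟨x, hx, fun j => ?_⟩
      rw [hprod _ _ (fun i _ => zpow_ne_zero _ (ne_of_gt (hx i))), hv j]
      exact Finset.sum_congr rfl fun i _ => by
        rw [hpow (x i) (ne_of_gt (hx i)), hνx i]
  rw [hset]
  have hrange : {w : Fin m → ℝ | ∃ v : Fin n → ℝ, ∀ j, w j = ∑ i, (A i j : ℝ) * v i}
      = ↑(LinearMap.range ((Matrix.of fun i j => (A i j : ℝ)).vecMulLinear)) := by
    ext w
    constructor
    · rintro ⟨v, hv⟩
      refine ⟨v, funext fun j => ?_⟩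
      rw [hv j]
      simp [Matrix.vecMul, dotProduct, mul_comm]
    · rintro ⟨v, hv⟩
      refine ⟨v, fun j => ?_⟩
      rw [← hv]
      simp [Matrix.vecMul, dotProduct, mul_comm]
  rw [hrange]
  exact (Submodule.closed_of_finiteDimensional _).closure_eq
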